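/- Let p be a prime and n ≥ 2. If a and b are generators of Γ_{p,n} taken from the list {p^n, p^n - p^{n-1}, ..., p^n - 1}, then a + b ≥ p^n; equivalently the elements of Γ_{p,n} that are ≤ p^n are exactly 0 together with the generators themselves (assuming n(p-1) ≥ 3). -/

import Mathlib

/-- Generators of the numerical semigroup `Γ_{p,n}`. -/
def gammaGen (p n : ℕ) : Set ℕ :=
  {m | m = p ^ n ∨ ∃ j < n, m = p ^ n - p ^ j}

/-- The numerical semigroup `Γ_{p,n} = ⟨p^n, p^n - p^{n-1}, …, p^n - 1⟩`. -/
def Gamma (p n : ℕ) : AddSubmonoid ℕ := AddSubmonoid.closure (gammaGen p n)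

lemma gammaGen_lower (p n : ℕ) (hp : 2 ≤ p) (hn : 1 ≤ n) :
    ∀ g ∈ gammaGen p n, p ^ n - p ^ (n - 1) ≤ g := by
  rintro g (rfl | ⟨j, hj, rfl⟩)
  · exact Nat.sub_le _ _
  · exact Nat.sub_le_sub_left (Nat.pow_le_pow_right (by omega) (by omega)) _

lemma two_c (p n : ℕ) (hp : 2 ≤ p) (hn : 1 ≤ n) :
    p ^ n ≤ (p ^ n - p ^ (n - 1)) + (p ^ n - p ^ (n - 1)) := by
  have h : p ^ n = p ^ (n - 1) * p := by
    rw [← pow_succ]; congr 1; omega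
  have h2 : p ^ (n - 1) * 2 ≤ p ^ (n - 1) * p :=
    Nat.mul_le_mul_left _ hp
  omega

theorem Gamma_small_elements (p n : ℕ) (hp : p.Prime) (hn : 2 ≤ n)
    (h3 : 3 ≤ n * (p - 1)) :
    (∀ a ∈ gammaGen p n, ∀ b ∈ gammaGen p n, p ^ n ≤ a + b) ∧
    (∀ m ∈ Gamma p n, m ≤ p ^ n → m = 0 ∨ m ∈ gammaGen p n) := by
  have hp2 : 2 ≤ p := hp.two_le
  have hn1 : 1 ≤ n := by omega
  have hlow := gammaGen_lower p n hp2 hn1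
  have h2c := two_c p n hp2 hn1
  constructor
  · intro a ha b hb
    calc p ^ n ≤ (p ^ n - p ^ (n - 1)) + (p ^ n - p ^ (n - 1)) := h2c
    _ ≤ a + b := Nat.add_le_add (hlow a ha) (hlow b hb)
  · have key : ∀ m ∈ Gamma p n, m = 0 ∨ ((p ^ n - p ^ (n - 1)) ≤ m ∧ (m ≤ p ^ n → m ∈ gammaGen p n)) := by
      intro m hm
      induction hm using AddSubmonoid.closure_induction with
      | mem x hx => exact Or.inr ⟨hlow x hx, fun _ => hx⟩
      | zero => exact Or.inl rfl
      | add x y hx hy ihx ihy =>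
        rcases ihx with rfl | ⟨hcx, hgx⟩
        · simpa using ihy
        rcases ihy with rfl | ⟨hcy, hgy⟩
        · exact Or.inr ⟨by simpa using hcx, by simpa using hgx⟩
        · refine Or.inr ⟨le_trans hcx (Nat.le_add_right _ _), fun hxy => ?_⟩
          have : p ^ n ≤ x + y := le_trans h2c (Nat.add_le_add hcx hcy)
          have : x + y = p ^ n := le_antisymm hxy this
          exact Or.inl this
    intro m hm hle
    rcases key m hm with rfl | ⟨_, hg⟩
    · exact Or.inl rfl
    · exact Or.inr (hg hle)
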